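/- Fundamental lemma on vertical vector fields: let (E,d,ρ) be a resolution of a Hermann foliation (the complex ···→Γ(E_{-2})→Γ(E_{-1})→𝒟→0 is exact), and consider the complex of vertical vector fields of arity n with differential X↦[Q⁽⁰⁾,X]. Then (1) every root-free cocycle (cocycle with vanishing component of depth 1, i.e. no component in Γ(S^{n+1}(E*)⊗E_{-1})) is a coboundary; (2) every cocycle whose depth-1 component lies in the kernel of id⊗ρ is a coboundary. -/
import Mathlib


/-- Fundamental lemma on vertical vector fields.  Let `(E, d, ρ)` be a resolution of a
Hermann foliation `𝒟`, i.e. the complex `⋯ → Γ(E_{-2}) → Γ(E_{-1}) → 𝒟 → 0` is exact.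
Vertical vector fields of arity `n` are (formal sums of) elements of the bicomplex with
components `C p = Γ(S^{n+1}(E*) ⊗ E_{-(p+1)})` of depth `p+1`; the differential
`X ↦ [Q⁰, X]` is the total differential `(∂X)_p = v_p(X_p) + h_p(X_{p+1})`, where
`h = id⊗d` is the (exact, except in depth 1) horizontal differential, `v = Q⁰⊗id` the
vertical one (`v² = 0`, `h` and `v` anticommute), and `r = id⊗ρ` in depth 1.

Then (1) every root-free cocycle `X` (i.e. with vanishing depth-1 component `X 0`) is a
coboundary, and (2) every cocycle whose depth-1 component lies in the kernel of `id⊗ρ`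
is a coboundary. -/
theorem stmt10 {R D : Type*} [CommRing R] [AddCommGroup D] [Module R D]
    (C : ℕ → Type*) [∀ p, AddCommGroup (C p)] [∀ p, Module R (C p)]
    (h : ∀ p, C (p + 1) →ₗ[R] C p)
    (v : ∀ p, C p →ₗ[R] C p)
    (r : C 0 →ₗ[R] D)
    (hv : ∀ (p : ℕ) (x : C p), v p (v p x) = 0)
    (hanti : ∀ (p : ℕ) (x : C (p + 1)), h p (v (p + 1) x) = - v p (h p x))
    (hex0 : LinearMap.range (h 0) = LinearMap.ker r)
    (hex : ∀ p, LinearMap.range (h (p + 1)) = LinearMap.ker (h p))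
    (X : ∀ p, C p)
    (hcocycle : ∀ p, v p (X p) + h p (X (p + 1)) = 0) :
    (X 0 = 0 → ∃ Y : ∀ p, C p, ∀ p, v p (Y p) + h p (Y (p + 1)) = X p) ∧
    (r (X 0) = 0 → ∃ Y : ∀ p, C p, ∀ p, v p (Y p) + h p (Y (p + 1)) = X p) := by
  have main : r (X 0) = 0 → ∃ Y : ∀ p, C p, ∀ p, v p (Y p) + h p (Y (p + 1)) = X p := by
    intro hr
    have h0 : ∃ y1 : C 1, h 0 y1 = X 0 := by
      have hm : X 0 ∈ LinearMap.range (h 0) := by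
        rw [hex0]; exact hr
      exact hm
    let G : ∀ p : ℕ, {yy : C p × C (p + 1) // h p yy.2 = X p - v p yy.1} := fun p =>
      Nat.rec (motive := fun p => {yy : C p × C (p + 1) // h p yy.2 = X p - v p yy.1})
        ⟨(0, h0.choose), by simp [h0.choose_spec]⟩
        (fun p ih => by
          have hb : h p ih.1.2 = X p - v p ih.1.1 := ih.2
          have hker : X (p + 1) - v (p + 1) ih.1.2 ∈ LinearMap.range (h (p + 1)) := by
            rw [hex p]
            have h1 : h p (X (p + 1)) = - v p (X p) :=
              eq_neg_of_add_eq_zero_right (hcocycle p)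
            simp only [LinearMap.mem_ker, map_sub, h1, hanti p ih.1.2, hb, map_sub,
              hv p ih.1.1]
            abel
          exact ⟨(ih.1.2, hker.choose), by rw [hker.choose_spec]⟩) p
    refine ⟨fun p => (G p).1.1, fun p => ?_⟩
    have hstep : (G (p + 1)).1.1 = (G p).1.2 := rfl
    show v p (G p).1.1 + h p (G (p + 1)).1.1 = X p
    rw [hstep, (G p).2]
    abel
  refine ⟨fun h0 => main (by rw [h0]; simp), main⟩
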